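/- Let G be a complex adjoint reductive group with Weyl group W, coweight lattice Λ, dual torus Ť = Spec k[Λ]. The fiber product Ť ×_{Ť//W} Ť (i.e. Spec(R ⊗_{R^W} R) with R = k[Λ]) is reduced, and equals the union of the graphs Γ_w ⊂ Ť × Ť of the Weyl group elements w ∈ W with the reduced induced scheme structure. -/

import Mathlib

set_option maxHeartbeats 1000000
set_option synthInstance.maxHeartbeats 400000

open scoped TensorProduct
open AddMonoidAlgebra

/-- The subalgebra of invariants of a group acting by algebra automorphisms. -/
def invariantsSubalgebra {k A W : Type} [CommSemiring k] [Semiring A] [Algebra k A] [Monoid W]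
    (σ : W →* (A ≃ₐ[k] A)) : Subalgebra k A where
  carrier := {f | ∀ w, σ w f = f}
  mul_mem' := fun ha hb w => by rw [map_mul, ha w, hb w]
  add_mem' := fun ha hb w => by rw [map_add, ha w, hb w]
  algebraMap_mem' := fun r w => (σ w).commutes r

section Nu

variable {R W : Type} [CommRing R] [IsDomain R] [Group W]

/-- Extension of a ring automorphism action to the fraction field. -/
noncomputable def nuFun (σ : W →* (R ≃+* R)) (w : W) :
    FractionRing R ≃+* FractionRing R :=
  IsFractionRing.ringEquivOfRingEquiv (σ w)

lemma nuFun_algebraMap (σ : W →* (R ≃+* R)) (w : W) (r : R) :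
    nuFun σ w (algebraMap R (FractionRing R) r) =
      algebraMap R (FractionRing R) (σ w r) :=
  IsFractionRing.ringEquivOfRingEquiv_algebraMap _ r

lemma fracext (φ ψ : FractionRing R ≃+* FractionRing R)
    (h : ∀ r : R, φ (algebraMap R (FractionRing R) r) =
      ψ (algebraMap R (FractionRing R) r)) : φ = ψ := by
  have h2 : (φ : FractionRing R →+* FractionRing R) = ψ :=
    IsLocalization.ringHom_ext (nonZeroDivisors R)
      (RingHom.ext fun r => by simpa using h r)
  exact RingEquiv.ext fun y => DFunLike.congr_fun h2 y

/-- The extended action as a monoid hom to ring automorphisms. -/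
noncomputable def nu (σ : W →* (R ≃+* R)) :
    W →* RingAut (FractionRing R) where
  toFun := nuFun σ
  map_one' := fracext _ _ fun r => by
    rw [nuFun_algebraMap, map_one σ]; rfl
  map_mul' := fun w₁ w₂ => fracext _ _ fun r => by
    have : (nuFun σ w₁ * nuFun σ w₂) (algebraMap R (FractionRing R) r)
        = nuFun σ w₁ (nuFun σ w₂ (algebraMap R (FractionRing R) r)) := rfl
    rw [this, nuFun_algebraMap, nuFun_algebraMap, nuFun_algebraMap, map_mul σ]
    rfl

/-- The induced `MulSemiringAction` on the fraction field. -/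
noncomputable def fracAction (σ : W →* (R ≃+* R)) :
    MulSemiringAction W (FractionRing R) :=
  MulSemiringAction.compHom _ (nu σ)

end Nu

section Aux

variable {k R W : Type} [CommSemiring k] [CommRing R] [Algebra k R] [Group W]
  (σ : W →* (R ≃ₐ[k] R))

/-- `σ` as a monoid hom to ring automorphisms. -/
def ringAutHom : W →* (R ≃+* R) where
  toFun w := (σ w : R ≃+* R)
  map_one' := by
    ext x
    show (σ 1 : R ≃+* R) x = (1 : R ≃+* R) x
    rw [map_one σ]; rfl
  map_mul' w₁ w₂ := by
    ext x
    show (σ (w₁ * w₂) : R ≃+* R) x = ((σ w₁ : R ≃+* R) * (σ w₂ : R ≃+* R)) x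
    rw [map_mul σ]; rfl

@[simp] lemma ringAutHom_apply (w : W) (x : R) : ringAutHom σ w x = σ w x := rfl

/-- `σ w` as an algebra hom over the invariants. -/
def sigmaAlgHom (w : W) : R →ₐ[invariantsSubalgebra σ] R where
  toFun := σ w
  map_one' := map_one _
  map_mul' := map_mul _
  map_zero' := map_zero _
  map_add' := map_add _
  commutes' := fun a => a.2 w

@[simp] lemma sigmaAlgHom_apply (w : W) (x : R) : sigmaAlgHom σ w x = σ w x := rfl

/-- The map `R ⊗_{R^W} R → ∏_W R`, `f ⊗ g ↦ ((w·f)·g)_w`. -/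
noncomputable def psi : R ⊗[invariantsSubalgebra σ] R →ₐ[invariantsSubalgebra σ] (W → R) :=
  Pi.algHom _ _ fun w => Algebra.TensorProduct.productMap (sigmaAlgHom σ w) (AlgHom.id _ _)

lemma psi_tmul (f g : R) (w : W) :
    psi σ (f ⊗ₜ[invariantsSubalgebra σ] g) w = σ w f * g := rfl

end Aux

/-- A basis of `R` over the invariants stays linearly independent over the fixed
field of the fraction field. -/
theorem indep_aux {k R W F : Type} [CommRing k] [CommRing R] [IsDomain R] [Algebra k R]
    [Group W] [Fintype W] [Field F] [Algebra R F] [IsFractionRing R F]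
    [MulSemiringAction W F]
    (σ : W →* (R ≃ₐ[k] R))
    (hsmul : ∀ (w : W) (r : R), w • (algebraMap R F r) = algebraMap R F (σ w r))
    {ι : Type} (e : Module.Basis ι (invariantsSubalgebra σ) R)
    (t : Finset ι) (g : ι → FixedPoints.subfield W F)
    (hrel : (∑ j ∈ t, g j • (algebraMap R F (e j))) = 0) : ∀ j ∈ t, g j = 0 := by
  classical
  set ee := algebraMap R F with heedef
  have hee : Function.Injective ee := IsFractionRing.injective R F
  have hKsmul : ∀ (c : FixedPoints.subfield W F) (w : W), w • (c : F) = c := fun c w => c.2 w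
  -- denominators
  have hsur : ∀ j : ι, ∃ (r : R) (s : nonZeroDivisors R),
      (g j : F) * ee s = ee r := by
    intro j
    obtain ⟨⟨r, s⟩, hmk⟩ := IsLocalization.mk'_surjective (nonZeroDivisors R) (g j : F)
    exact ⟨r, s, by rw [← hmk, heedef]; exact IsLocalization.mk'_spec ..⟩
  choose r s hrs using hsur
  set sp : R := ∏ j ∈ t, (s j : R) with hsp
  set N : R := ∏ w : W, σ w sp with hN
  have hσN : ∀ w, σ w N = N := by
    intro w
    calc σ w N = ∏ w' : W, σ w (σ w' sp) := by rw [hN, map_prod]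
    _ = ∏ w' : W, σ (w * w') sp := by
        refine Finset.prod_congr rfl fun w' _ => ?_
        rw [map_mul σ, AlgEquiv.mul_apply]
    _ = N := Fintype.prod_equiv (Equiv.mulLeft w) _ _ (fun w' => rfl)
  have hsp0 : sp ≠ 0 := by
    have hmem : sp ∈ nonZeroDivisors R := Submonoid.prod_mem _ fun j _ => (s j).2
    exact nonZeroDivisors.ne_zero hmem
  have hN0 : N ≠ 0 := by
    rw [hN]
    refine Finset.prod_ne_zero_iff.mpr fun w _ h0 => hsp0 ?_
    rw [← (σ w).symm_apply_apply sp, h0, map_zero]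
  obtain ⟨Mc, hMc⟩ : ∃ Mc, N = sp * Mc :=
    ⟨∏ w ∈ Finset.univ.erase 1, σ w sp, by
      rw [hN, ← Finset.mul_prod_erase Finset.univ _ (Finset.mem_univ (1 : W))]
      congr 1
      rw [map_one σ]; rfl⟩
  have key : ∀ j ∈ t, ∃ a : invariantsSubalgebra σ, ee (a : R) = (g j : F) * ee N := by
    intro j hj
    obtain ⟨tj, htj⟩ : ∃ tj, sp = (s j : R) * tj :=
      ⟨∏ i ∈ t.erase j, (s i : R), (Finset.mul_prod_erase t _ hj).symm⟩
    set a : R := r j * (tj * Mc) with ha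
    have haF : ee a = (g j : F) * ee N := by
      have hfac : (s j : R) * (tj * Mc) = N := by rw [← mul_assoc, ← htj, ← hMc]
      calc ee a = ee (r j) * (ee tj * ee Mc) := by rw [ha, map_mul, map_mul]
      _ = ((g j : F) * ee (s j)) * (ee tj * ee Mc) := by rw [← hrs j]
      _ = (g j : F) * (ee (s j) * (ee tj * ee Mc)) := by ring
      _ = (g j : F) * ee N := by rw [← map_mul, ← map_mul, hfac]
    have hainv : ∀ w, σ w a = a := by
      intro w
      apply hee
      rw [heedef] at haF ⊢
      rw [← hsmul w a, haF, smul_mul', hKsmul (g j) w, hsmul w N, hσN w, ← haF]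
    exact ⟨⟨a, hainv⟩, haF⟩
  choose! a haF using key
  have hrelR : (∑ j ∈ t, a j • e j) = (0 : R) := by
    apply hee
    rw [map_sum, map_zero]
    have hterm : ∀ j ∈ t, ee (a j • e j) = ee N * ((g j : F) * ee (e j)) := by
      intro j hj
      have : (a j • e j : R) = (a j : R) * e j := rfl
      rw [this, map_mul, haF j hj]
      ring
    rw [Finset.sum_congr rfl hterm, ← Finset.mul_sum]
    have : ∑ j ∈ t, (g j : F) * ee (e j) = 0 := by
      rw [← hrel]
      refine Finset.sum_congr rfl fun j _ => ?_
      rw [Algebra.smul_def, FixedPoints.coe_algebraMap]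
      rfl
    rw [this, mul_zero]
  intro j hj
  have ha0 : a j = 0 :=
    linearIndependent_iff'.1 e.linearIndependent t a hrelR j hj
  have hz : (g j : F) * ee N = 0 := by
    rw [← haF j hj, ha0]
    simp
  have heN : ee N ≠ 0 := fun h => hN0 (hee (by rw [h, map_zero]))
  have : (g j : F) = 0 := by
    rcases mul_eq_zero.1 hz with h | h
    · exact h
    · exact absurd h heN
  exact Subtype.ext this

/-- Injectivity of `psi`. -/
theorem psi_injective {k R W F : Type} [CommRing k] [CommRing R] [IsDomain R] [Algebra k R]
    [Group W] [Fintype W] [Field F] [Algebra R F] [IsFractionRing R F]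
    [MulSemiringAction W F]
    (σ : W →* (R ≃ₐ[k] R))
    (hsmul : ∀ (w : W) (r : R), w • (algebraMap R F r) = algebraMap R F (σ w r))
    (hfree : Module.Free (invariantsSubalgebra σ) R) :
    Function.Injective (psi σ) := by
  classical
  rw [injective_iff_map_eq_zero]
  intro x hx
  haveI : Nontrivial (invariantsSubalgebra σ) :=
    ⟨⟨0, 1, fun h => zero_ne_one (congrArg Subtype.val h)⟩⟩
  let ι := Module.Free.ChooseBasisIndex (invariantsSubalgebra σ) R
  let e : Module.Basis ι (invariantsSubalgebra σ) R := Module.Free.chooseBasis _ _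
  have hee : Function.Injective (algebraMap R F) := IsFractionRing.injective R F
  set v : ι → F := fun j => algebraMap R F (e j) with hv
  have hv_inj : Function.Injective v := fun i j h => e.injective (hee h)
  -- linear independence of v over the fixed subfield
  have hK_full : LinearIndependent (FixedPoints.subfield W F) v :=
    linearIndependent_iff'.2 fun t g h => indep_aux σ hsmul e t g h
  -- full independence of the orbit-function vectors over F
  have hfull : ∀ (t : Finset ι) (c : ι → F),
      (∑ j ∈ t, c j • MulAction.toFun W F (v j)) = 0 → ∀ j ∈ t, c j = 0 := by
    intro t c hrel j hj
    set s : Finset F := t.image v with hs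
    -- the coercion family on s is linearly independent over the fixed field
    have hsK : LinearIndependent (FixedPoints.subfield W F)
        (fun i : (s : Set F) => (i : F)) := by
      haveI : Nonempty ι := ⟨j⟩
      have hf : ∀ i : (s : Set F), v (Function.invFun v (i : F)) = (i : F) := by
        intro i
        have : (i : F) ∈ s := i.2
        obtain ⟨j', _, hj'⟩ := Finset.mem_image.1 this
        exact Function.invFun_eq ⟨j', hj'⟩
      have hinj : Function.Injective (fun i : (s : Set F) => Function.invFun v (i : F)) := by
        intro i i' h
        have h' : Function.invFun v (i : F) = Function.invFun v (i' : F) := h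
        apply Subtype.ext
        rw [← hf i, ← hf i', h']
      have := hK_full.comp _ hinj
      convert this using 1
      funext i
      exact (hf i).symm
    have hsF := FixedPoints.linearIndependent_smul_of_linearIndependent W F hsK
    -- restrict to t
    have hm_inj : Function.Injective
        (fun j : {y // y ∈ t} => (⟨v j, Finset.mem_coe.2 (Finset.mem_image_of_mem v j.2)⟩ :
          (s : Set F))) := by
      intro a b h
      exact Subtype.ext (hv_inj (congrArg Subtype.val h))
    have hT : LinearIndependent F
        (fun j : {y // y ∈ t} => MulAction.toFun W F (v j)) := hsF.comp _ hm_inj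
    rw [Fintype.linearIndependent_iff] at hT
    refine hT (fun j => c j) ?_ ⟨j, hj⟩
    rw [Finset.sum_coe_sort t (fun j => c j • MulAction.toFun W F (v j))]
    exact hrel
  -- expand x along the basis
  let Θ : R ⊗[invariantsSubalgebra σ] R ≃ₗ[invariantsSubalgebra σ] (ι →₀ R) :=
    (TensorProduct.congr e.repr (LinearEquiv.refl _ R)).trans
      (TensorProduct.finsuppScalarLeft _ R ι)
  have hΘ_single : ∀ (j : ι) (r : R),
      Θ ((e j) ⊗ₜ[invariantsSubalgebra σ] r) = Finsupp.single j r := by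
    intro j r
    show (TensorProduct.finsuppScalarLeft _ R ι)
        ((TensorProduct.congr e.repr (LinearEquiv.refl _ R)) (e j ⊗ₜ r)) = _
    rw [TensorProduct.congr_tmul, Module.Basis.repr_self, LinearEquiv.refl_apply,
      TensorProduct.finsuppScalarLeft_apply_tmul, Finsupp.sum_single_index]
    · rw [one_smul]
    · rw [zero_smul, Finsupp.single_zero]
  set l : ι →₀ R := Θ x with hl
  have hx_expand : x = l.sum fun j r => (e j) ⊗ₜ[invariantsSubalgebra σ] r := by
    apply Θ.injective
    rw [map_finsuppSum]
    have : (l.sum fun j r => Θ ((e j) ⊗ₜ[invariantsSubalgebra σ] r)) =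
        l.sum fun j r => Finsupp.single j r := by
      exact Finsupp.sum_congr fun j _ => hΘ_single j (l j)
    rw [this, Finsupp.sum_single]
  have hpsi_sum : ∀ w : W, (l.sum fun j r => σ w (e j) * r) = 0 := by
    intro w
    have h1 : psi σ x w = 0 := by rw [hx]; rfl
    rw [hx_expand] at h1
    rw [map_finsuppSum] at h1
    have h2 : (l.sum fun j r => psi σ ((e j) ⊗ₜ[invariantsSubalgebra σ] r)) w =
        l.sum fun j r => σ w (e j) * r := by
      rw [Finsupp.sum, Finsupp.sum, Finset.sum_apply]
      exact Finset.sum_congr rfl fun j _ => psi_tmul σ (e j) (l j) w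
    rw [← h2]
    exact h1
  -- transfer the relation to F and conclude
  have hrelF : (∑ j ∈ l.support, algebraMap R F (l j) • MulAction.toFun W F (v j)) = 0 := by
    funext w
    rw [Finset.sum_apply, Pi.zero_apply]
    have hterm : ∀ j ∈ l.support,
        (algebraMap R F (l j) • MulAction.toFun W F (v j)) w =
          algebraMap R F (l j * σ w (e j)) := by
      intro j _
      rw [Pi.smul_apply, MulAction.toFun_apply, smul_eq_mul, hv]
      rw [hsmul w (e j), ← map_mul]
    rw [Finset.sum_congr rfl hterm, ← map_sum]
    have : (∑ j ∈ l.support, l j * σ w (e j)) = 0 := by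
      rw [← hpsi_sum w]
      exact Finset.sum_congr rfl fun j _ => mul_comm _ _
    rw [this, map_zero]
  have hl0 : ∀ j ∈ l.support, algebraMap R F (l j) = 0 :=
    hfull l.support (fun j => algebraMap R F (l j)) hrelF
  have hlz : l = 0 := by
    ext j
    by_cases hj : j ∈ l.support
    · have h0 : algebraMap R F (l j) = algebraMap R F 0 := by
        rw [map_zero]; exact hl0 j hj
      simpa using hee h0
    · simpa using Finsupp.notMem_support_iff.1 hj
  rw [hx_expand, hlz, Finsupp.sum_zero_index]

/-- `Ť ×_{Ť//W} Ť = Spec (R ⊗_{R^W} R)` is reduced, and it equals the union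
of the graphs `Γ_w` of the Weyl group elements with the reduced induced structure:
the kernel of `R ⊗_k R → R ⊗_{R^W} R` equals the kernel of
`R ⊗_k R → ∏_W R`, `f ⊗ g ↦ ((w·f)·g)_w` (the ideal of the union of graphs).
Freeness of `R` over `R^W` (Pittie–Steinberg) encodes that `G` is adjoint. -/
theorem stmt4 {k Λ W : Type} [Field k] [AddCommGroup Λ] [Module.Free ℤ Λ] [Module.Finite ℤ Λ]
    [Group W] [Finite W]
    (ρ : W →* Multiplicative (AddAut Λ))
    (σ : W →* (AddMonoidAlgebra k Λ ≃ₐ[k] AddMonoidAlgebra k Λ))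
    (hσρ : ∀ (w : W) (l : Λ),
      σ w (AddMonoidAlgebra.single l (1 : k)) = AddMonoidAlgebra.single (Multiplicative.toAdd (ρ w) l) (1 : k))
    (hfree : Module.Free (invariantsSubalgebra σ) (AddMonoidAlgebra k Λ)) :
    IsReduced (AddMonoidAlgebra k Λ ⊗[(invariantsSubalgebra σ)] AddMonoidAlgebra k Λ) ∧
    ∀ (π : (AddMonoidAlgebra k Λ ⊗[k] AddMonoidAlgebra k Λ) →+*
        (AddMonoidAlgebra k Λ ⊗[(invariantsSubalgebra σ)] AddMonoidAlgebra k Λ))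
      (μ : (AddMonoidAlgebra k Λ ⊗[k] AddMonoidAlgebra k Λ) →+* (W → AddMonoidAlgebra k Λ)),
      (∀ f g : AddMonoidAlgebra k Λ,
        π (f ⊗ₜ[k] g) = f ⊗ₜ[(invariantsSubalgebra σ)] g) →
      (∀ f g : AddMonoidAlgebra k Λ, μ (f ⊗ₜ[k] g) = fun w => σ w f * g) →
      {x | π x = 0} = {x | μ x = 0} := by
  classical
  cases nonempty_fintype W
  haveI : UniqueSums Λ :=
    ((Module.Free.chooseBasis ℤ Λ).repr.toAddEquiv).uniqueSums_iff.mpr inferInstance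
  haveI : IsDomain (AddMonoidAlgebra k Λ) := NoZeroDivisors.to_isDomain _
  letI := fracAction (ringAutHom σ)
  have hsmul : ∀ (w : W) (f : AddMonoidAlgebra k Λ),
      w • (algebraMap (AddMonoidAlgebra k Λ) (FractionRing (AddMonoidAlgebra k Λ)) f) =
        algebraMap (AddMonoidAlgebra k Λ) (FractionRing (AddMonoidAlgebra k Λ)) (σ w f) :=
    fun w f => nuFun_algebraMap (ringAutHom σ) w f
  have hinj := psi_injective σ hsmul hfree
  constructor
  · exact isReduced_of_injective (psi σ).toRingHom hinj
  · intro π μ hπ hμ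
    have hcomp : ∀ x, μ x = psi σ (π x) := by
      intro x
      induction x using TensorProduct.induction_on with
      | zero => rw [map_zero, map_zero, map_zero]
      | tmul f g =>
        rw [hπ f g, hμ f g]
        funext w
        exact (psi_tmul σ f g w).symm
      | add x y hx hy => rw [map_add, map_add, map_add, hx, hy]
    ext x
    simp only [Set.mem_setOf_eq]
    constructor
    · intro h; rw [hcomp, h, map_zero]
    · intro h
      rw [hcomp] at h
      exact hinj (by rw [map_zero]; exact h)
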